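/- Let L be a finite p-group of nilpotency class ≤ 2 with W = [L,L] elementary abelian and central, U = L/W elementary abelian, and let f: Λ²U → W be the linear map induced by the commutator. Suppose dim Ker(f) ≥ k · dim U for some k ∈ ℕ, and |L| = i. Then |W| ≤ p^{(log_p i)(log_p i − 1 − 2k)/2}, and consequently the number of commuting pairs in L satisfies |{(x,y) : xy=yx}| ≥ i² · p^{(log_p i)(2k + 1 − log_p i)/2}. -/

import Mathlib

open scoped commutatorElement

/-- Counting lemma (Neumann-type): for a class-`≤ 2` group, each centralizer has
index at most `|W|`, hence the number of commuting pairs times `|W|` is at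
least `|L|²`. -/
theorem stmt16_count {L : Type*} [Group L] [Finite L] (W : Subgroup L)
    (hW : W = commutator L) (hcentral : W ≤ Subgroup.center L) :
    Nat.card L * Nat.card L ≤
      Nat.card {q : L × L | q.1 * q.2 = q.2 * q.1} * Nat.card W := by
  have hfiber : ∀ x : L,
      Nat.card L ≤ Nat.card {y : L // x * y = y * x} * Nat.card W := by
    intro x
    have hmem : ∀ z : L, ⁅x, z⁆ ∈ W := by
      intro z
      rw [hW, commutator_def]
      exact Subgroup.commutator_mem_commutator (Subgroup.mem_top x) (Subgroup.mem_top z)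
    have hmul : ∀ y z : L, ⁅x, y * z⁆ = ⁅x, y⁆ * ⁅x, z⁆ := by
      intro y z
      have hc : ∀ g : L, g * ⁅x, z⁆ = ⁅x, z⁆ * g :=
        Subgroup.mem_center_iff.mp (hcentral (hmem z))
      have h1 : x * z * x⁻¹ * z⁻¹ = ⁅x, z⁆ := rfl
      have h2 : z * x⁻¹ * z⁻¹ = x⁻¹ * ⁅x, z⁆ := by
        rw [← h1]; group
      calc ⁅x, y * z⁆ = x * y * (z * x⁻¹ * z⁻¹) * y⁻¹ := by
            show x * (y * z) * x⁻¹ * (y * z)⁻¹ = _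
            group
        _ = x * y * (x⁻¹ * ⁅x, z⁆) * y⁻¹ := by rw [h2]
        _ = x * y * x⁻¹ * (⁅x, z⁆ * y⁻¹) := by group
        _ = x * y * x⁻¹ * (y⁻¹ * ⁅x, z⁆) := by rw [hc y⁻¹]
        _ = ⁅x, y⁆ * ⁅x, z⁆ := by show _ = (x * y * x⁻¹ * y⁻¹) * _; group
    let φ : L →* W :=
      { toFun := fun z => ⟨⁅x, z⁆, hmem z⟩
        map_one' := by ext; simp
        map_mul' := fun y z => by ext; exact hmul y z }
    have hker : ∀ y : L, y ∈ φ.ker ↔ x * y = y * x := by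
      intro y
      rw [MonoidHom.mem_ker]
      constructor
      · intro h
        have : ⁅x, y⁆ = 1 := congrArg Subtype.val h
        exact commutatorElement_eq_one_iff_mul_comm.mp this
      · intro h
        ext
        exact commutatorElement_eq_one_iff_mul_comm.mpr h
    have e1 : {y : L // x * y = y * x} ≃ φ.ker :=
      Equiv.subtypeEquiv (Equiv.refl L) (fun y => by simp [hker y])
    have hcard : Nat.card L = Nat.card (L ⧸ φ.ker) * Nat.card φ.ker :=
      Subgroup.card_eq_card_quotient_mul_card_subgroup φ.ker
    have hrange : Nat.card (L ⧸ φ.ker) ≤ Nat.card W := by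
      rw [Nat.card_congr (QuotientGroup.quotientKerEquivRange φ).toEquiv]
      exact Nat.card_le_card_of_injective Subtype.val Subtype.val_injective
    calc Nat.card L = Nat.card (L ⧸ φ.ker) * Nat.card φ.ker := hcard
      _ ≤ Nat.card W * Nat.card φ.ker := Nat.mul_le_mul_right _ hrange
      _ = Nat.card {y : L // x * y = y * x} * Nat.card W := by
          rw [Nat.card_congr e1, Nat.mul_comm]
  have e : {q : L × L | q.1 * q.2 = q.2 * q.1} ≃ Σ x : L, {y : L // x * y = y * x} :=
    { toFun := fun q => ⟨q.1.1, q.1.2, q.2⟩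
      invFun := fun s => ⟨(s.1, s.2.1), s.2.2⟩
      left_inv := fun _ => rfl
      right_inv := fun _ => rfl }
  classical
  cases nonempty_fintype L
  have hsig : Nat.card {q : L × L | q.1 * q.2 = q.2 * q.1}
      = ∑ x : L, Nat.card {y : L // x * y = y * x} := by
    rw [Nat.card_congr e]
    simp [Nat.card_eq_fintype_card, Fintype.card_sigma]
  calc Nat.card L * Nat.card L = ∑ _x : L, Nat.card L := by
        simp [Finset.sum_const, Nat.card_eq_fintype_card, Nat.mul_comm]
    _ ≤ ∑ x : L, Nat.card {y : L // x * y = y * x} * Nat.card W :=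
        Finset.sum_le_sum (fun x _ => hfiber x)
    _ = (∑ x : L, Nat.card {y : L // x * y = y * x}) * Nat.card W := by
        rw [Finset.sum_mul]
    _ = _ := by rw [hsig]

/-- The dimension inequality, in the reals. -/
theorem stmt16_dim (k dU dW : ℕ) (hker : dW + k * dU ≤ dU * (dU - 1) / 2) :
    (dW : ℝ) ≤ (dU + dW : ℝ) * ((dU + dW : ℝ) - 1 - 2 * (k : ℝ)) / 2 := by
  rcases Nat.eq_zero_or_pos dU with h0 | h1
  · subst h0
    simp only [Nat.mul_zero, Nat.add_zero, Nat.zero_mul, Nat.zero_div, Nat.le_zero] at hker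
    subst hker; norm_num
  · have h2 : (dW + k * dU) * 2 ≤ dU * (dU - 1) :=
      (Nat.le_div_iff_mul_le (by norm_num)).mp hker
    have h3 : (dW : ℝ) * 2 + 2 * (k : ℝ) * dU ≤ (dU : ℝ) * ((dU : ℝ) - 1) := by
      have := Nat.cast_le (α := ℝ) |>.mpr h2
      push_cast [Nat.cast_sub h1] at this
      nlinarith [this]
    have ha : (1 : ℝ) ≤ (dU : ℝ) := by exact_mod_cast h1
    have hw : (0 : ℝ) ≤ (dW : ℝ) := Nat.cast_nonneg _
    have hpos : (0 : ℝ) ≤ (dU : ℝ) - 1 - 2 * k := by nlinarith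
    nlinarith [mul_nonneg hw hpos, mul_nonneg (by positivity : (0:ℝ) ≤ (dU:ℝ) + dW) hw]

/-- for a finite `p`-group `L` of class `≤ 2` with `W = [L,L]`
central elementary abelian and `U = L/W` elementary abelian, if
`dim Ker f ≥ k·dim U` (equivalently, by the dimension formula of the commutator
map `f : Λ²U → W`, `d_W + k·d_U ≤ d_U(d_U-1)/2`), then
`|W| ≤ p^{(log_p i)(log_p i - 1 - 2k)/2}` and the number of commuting pairs is
at least `i²·p^{(log_p i)(2k + 1 - log_p i)/2}` where `i = |L|`. -/
theorem stmt16 {L : Type*} [Group L] [Finite L] (p k dU dW i : ℕ) (hp : p.Prime)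
    (W : Subgroup L) [W.Normal] (hW : W = commutator L)
    (hcentral : W ≤ Subgroup.center L)
    (helemW : ∀ w ∈ W, w ^ p = 1) (helemU : ∀ u : L ⧸ W, u ^ p = 1)
    (hcardL : Nat.card L = i) (hcardW : Nat.card W = p ^ dW)
    (hcardU : Nat.card (L ⧸ W) = p ^ dU)
    (hker : dW + k * dU ≤ dU * (dU - 1) / 2) :
    (Nat.card W : ℝ) ≤
        (p : ℝ) ^ ((dU + dW : ℝ) * ((dU + dW : ℝ) - 1 - 2 * (k : ℝ)) / 2) ∧
      (i : ℝ) ^ 2 * (p : ℝ) ^ ((dU + dW : ℝ) * (2 * (k : ℝ) + 1 - (dU + dW : ℝ)) / 2) ≤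
        (Nat.card {q : L × L | q.1 * q.2 = q.2 * q.1} : ℝ) := by
  have hp1 : (1 : ℝ) ≤ (p : ℝ) := by exact_mod_cast hp.one_lt.le
  have hppos : (0 : ℝ) < (p : ℝ) := lt_of_lt_of_le one_pos hp1
  set e1 : ℝ := (dU + dW : ℝ) * ((dU + dW : ℝ) - 1 - 2 * (k : ℝ)) / 2 with he1
  have hkey : (dW : ℝ) ≤ e1 := stmt16_dim k dU dW hker
  have hWcast : (Nat.card W : ℝ) = (p : ℝ) ^ ((dW : ℕ) : ℝ) := by
    rw [hcardW, Real.rpow_natCast]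
    push_cast
    ring
  have goal1 : (Nat.card W : ℝ) ≤ (p : ℝ) ^ e1 := by
    rw [hWcast]
    exact Real.rpow_le_rpow_of_exponent_le hp1 hkey
  refine ⟨goal1, ?_⟩
  -- second part
  have hcount := stmt16_count W hW hcentral
  have hcountR : (i : ℝ) ^ 2 ≤
      (Nat.card {q : L × L | q.1 * q.2 = q.2 * q.1} : ℝ) * (Nat.card W : ℝ) := by
    rw [← hcardL]
    have := Nat.cast_le (α := ℝ) |>.mpr hcount
    push_cast at this
    nlinarith [this]
  have hWpos : (0 : ℝ) < (Nat.card W : ℝ) := by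
    rw [hWcast]; exact Real.rpow_pos_of_pos hppos _
  have hstep1 : (i : ℝ) ^ 2 / (Nat.card W : ℝ) ≤
      (Nat.card {q : L × L | q.1 * q.2 = q.2 * q.1} : ℝ) :=
    (div_le_iff₀ hWpos).mpr hcountR
  have he1pos : (0 : ℝ) < (p : ℝ) ^ e1 := Real.rpow_pos_of_pos hppos _
  have hstep2 : (i : ℝ) ^ 2 / (p : ℝ) ^ e1 ≤ (i : ℝ) ^ 2 / (Nat.card W : ℝ) :=
    div_le_div_of_nonneg_left (by positivity) hWpos goal1
  have hexp : (dU + dW : ℝ) * (2 * (k : ℝ) + 1 - (dU + dW : ℝ)) / 2 = -e1 := by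
    rw [he1]; ring
  rw [hexp, Real.rpow_neg hppos.le, ← div_eq_mul_inv]
  exact le_trans hstep2 hstep1
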